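/- Let G be a finite group, F a family of subgroups of G, H ≤ G a subgroup, and R a commutative ring. For any RΓ_H-module N and any K ∈ F, there is an isomorphism of R-modules (ind^G_H N)(G/K) ≅ ⊕ N(g⁻¹Kg), where the sum runs over the cosets gH ∈ G/H such that g⁻¹Kg ≤ H. -/

import Mathlib

open CategoryTheory CategoryTheory.Limits

namespace OrbitPaper

variable {G : Type} [Group G]

/-- The conjugate subgroup `gKg⁻¹`. -/
def conjSub (g : G) (K : Subgroup G) : Subgroup G :=
  K.map (MulAut.conj g).toMonoidHom

/-- A *family* of subgroups: a collection closed under conjugation and taking subgroups. -/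
def IsFamily (F : Set (Subgroup G)) : Prop :=
  (∀ K ∈ F, ∀ g : G, conjSub g K ∈ F) ∧ (∀ K ∈ F, ∀ L : Subgroup G, L ≤ K → L ∈ F)

/-- `Fix A B` is the set of cosets of `B` in `G` that are fixed by the left translation
action of `A`; it is in canonical bijection with the set of `G`-maps `G/A ⟶ G/B`. -/
def Fix (A B : Subgroup G) : Type :=
  {x : G ⧸ B // ∀ a ∈ A, a • x = x}

namespace Fix

variable {A B C D : Subgroup G}

/-- The action of a `G`-map `G/B ⟶ G/C` on cosets of `B`. -/
def ap (x : Fix B C) (y : G ⧸ B) : G ⧸ C :=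
  Quotient.liftOn' y (fun a => a • x.1) (by
    intro a b hab
    rw [QuotientGroup.leftRel_apply] at hab
    show a • x.1 = b • x.1
    conv_rhs => rw [show b = a * (a⁻¹ * b) by group]
    rw [mul_smul, x.2 _ hab])

@[simp] lemma ap_mk (x : Fix B C) (a : G) : x.ap ((a : G) : G ⧸ B) = a • x.1 := rfl

lemma ap_smul (x : Fix B C) (g : G) (y : G ⧸ B) : x.ap (g • y) = g • x.ap y := by
  induction y using Quotient.inductionOn' with
  | h a =>
    show x.ap (g • ((a : G) : G ⧸ B)) = g • x.ap ((a : G) : G ⧸ B)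
    rw [MulAction.Quotient.smul_mk, ap_mk, ap_mk, smul_eq_mul, mul_smul]

/-- Composition of `G`-maps between coset spaces. -/
def comp (f : Fix A B) (x : Fix B C) : Fix A C :=
  ⟨x.ap f.1, fun a ha => by rw [← ap_smul, f.2 a ha]⟩

/-- The identity `G`-map `G/A ⟶ G/A`. -/
def one (A : Subgroup G) : Fix A A :=
  ⟨((1 : G) : G ⧸ A), fun a ha => by
    show a • ((1 : G) : G ⧸ A) = _
    rw [MulAction.Quotient.smul_mk]
    exact (QuotientGroup.eq).2 (by simpa using ha)⟩

lemma ap_one (y : G ⧸ B) : (one B).ap y = y := by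
  induction y using Quotient.inductionOn' with
  | h a =>
    show (one B).ap ((a : G) : G ⧸ B) = _
    rw [ap_mk]
    show a • ((1 : G) : G ⧸ B) = _
    rw [MulAction.Quotient.smul_mk, smul_eq_mul, mul_one]

lemma ap_ap (g : Fix B C) (h : Fix C D) (y : G ⧸ B) :
    (g.comp h).ap y = h.ap (g.ap y) := by
  induction y using Quotient.inductionOn' with
  | h a =>
    show (g.comp h).ap ((a : G) : G ⧸ B) = h.ap ((g.ap ((a : G) : G ⧸ B)))
    rw [ap_mk, ap_mk, ap_smul]
    rfl

@[simp] lemma one_comp (x : Fix A B) : (one A).comp x = x := by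
  apply Subtype.ext
  show x.ap ((1 : G) : G ⧸ A) = x.1
  rw [ap_mk, one_smul]

@[simp] lemma comp_one (f : Fix A B) : f.comp (one B) = f :=
  Subtype.ext (ap_one f.1)

lemma comp_assoc (f : Fix A B) (g : Fix B C) (h : Fix C D) :
    (f.comp g).comp h = f.comp (g.comp h) :=
  Subtype.ext (ap_ap g h f.1).symm

end Fix

/-- The orbit category `Or_F(G)`: objects are the subgroups in the family `F`
(representing the coset `G`-sets `G/H`), morphisms are the `G`-maps `G/H ⟶ G/K`. -/
structure Obj (G : Type) [Group G] (F : Set (Subgroup G)) : Type where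
  grp : Subgroup G
  mem : grp ∈ F

instance (F : Set (Subgroup G)) : Category (Obj G F) where
  Hom K L := Fix K.grp L.grp
  id K := Fix.one K.grp
  comp f g := f.comp g
  id_comp f := Fix.one_comp f
  comp_id f := Fix.comp_one f
  assoc f g h := Fix.comp_assoc f g h

/-- The category of (right) `RΓ_G`-modules: contravariant functors from the orbit
category `Or_F(G)` to `R`-modules. -/
abbrev OMod (G : Type) [Group G] (R : Type) [CommRing R] (F : Set (Subgroup G)) :=
  (Obj G F)ᵒᵖ ⥤ ModuleCat.{0} R

instance (R : Type) [CommRing R] (F : Set (Subgroup G)) :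
    HasFiniteBiproducts (OMod G R F) :=
  Abelian.hasFiniteBiproducts

variable (R : Type) [CommRing R]

/-- The `RΓ_G`-module `R[(G/L)^?]` sending `G/K` to the free `R`-module on the
`K`-fixed points of `G/L`.  For `L ∈ F` these are exactly the free modules `R[G/L^?]`. -/
noncomputable def stdMod (F : Set (Subgroup G)) (L : Subgroup G) : OMod G R F where
  obj K := ModuleCat.of R (Fix K.unop.grp L →₀ R)
  map {K K'} f := ModuleCat.ofHom (Finsupp.lmapDomain R R (fun x => Fix.comp f.unop x))
  map_id K := by
    have h : (fun x => Fix.comp (𝟙 K).unop x) = (id : Fix K.unop.grp L → Fix K.unop.grp L) :=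
      funext fun x => Fix.one_comp x
    show ModuleCat.ofHom (Finsupp.lmapDomain R R _) = _
    rw [h, Finsupp.lmapDomain_id]
    rfl
  map_comp {K K' K''} f g := by
    have h : (fun x : Fix K.unop.grp L => Fix.comp ((f ≫ g).unop) x) =
        (fun x : Fix K'.unop.grp L => Fix.comp g.unop x) ∘
          (fun x : Fix K.unop.grp L => Fix.comp f.unop x) :=
      funext fun x => (Fix.comp_assoc g.unop f.unop x)
    show ModuleCat.ofHom (Finsupp.lmapDomain R R _) = _
    rw [h, Finsupp.lmapDomain_comp]
    rfl

variable {R}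

/-- A finitely generated free `RΓ_G`-module: a finite direct sum of modules
`R[G/K^?]` with `K ∈ F`. -/
def IsFiniteFree {F : Set (Subgroup G)} (M : OMod G R F) : Prop :=
  ∃ (n : ℕ) (Ks : Fin n → Obj G F),
    Nonempty (M ≅ ⨁ (fun i => stdMod R F (Ks i).grp))

/-- A finitely generated projective `RΓ_G`-module: a direct summand (retract) of a
finitely generated free module. -/
def IsFGProjective {F : Set (Subgroup G)} (M : OMod G R F) : Prop :=
  ∃ N : OMod G R F, IsFiniteFree N ∧ ∃ (s : M ⟶ N) (r : N ⟶ M), s ≫ r = 𝟙 M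

/-- A finitely generated `RΓ_G`-module: admits an epimorphism from a finitely
generated free module. -/
def IsFG {F : Set (Subgroup G)} (M : OMod G R F) : Prop :=
  ∃ N : OMod G R F, IsFiniteFree N ∧ ∃ p : N ⟶ M, Epi p

/-- `P` is a projective resolution of `M` of length `≤ n`, by finitely generated
projective modules:  `0 → P_n → ⋯ → P_0 → M → 0` is exact. -/
def IsFiniteProjRes {F : Set (Subgroup G)} (M : OMod G R F)
    (P : ChainComplex (OMod G R F) ℕ)
    (π : P ⟶ (ChainComplex.single₀ (OMod G R F)).obj M) (n : ℕ) : Prop :=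
  (∀ i, IsFGProjective (P.X i)) ∧ (∀ i, i > n → IsZero (P.X i)) ∧ QuasiIso π

/-- `M` admits a finite projective resolution. -/
def HasFiniteProjRes {F : Set (Subgroup G)} (M : OMod G R F) : Prop :=
  ∃ P π n, IsFiniteProjRes M P π n


section Restriction

variable (H : Subgroup G)

/-- The family of subgroups of `H` induced by a family `F` of subgroups of `G`. -/
def fam (F : Set (Subgroup G)) : Set (Subgroup ↥H) :=
  {K : Subgroup ↥H | K.map H.subtype ∈ F}

/-- The canonical map `H/L → G/L`. -/
def push (L : Subgroup ↥H) : ↥H ⧸ L → G ⧸ (L.map H.subtype) :=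
  Quotient.map' Subtype.val (by
    intro a b hab
    rw [QuotientGroup.leftRel_apply] at hab ⊢
    exact ⟨a⁻¹ * b, hab, rfl⟩)

@[simp] lemma push_mk (L : Subgroup ↥H) (a : ↥H) :
    push H L ((a : ↥H) : ↥H ⧸ L) = ((a : G) : G ⧸ (L.map H.subtype)) := rfl

lemma push_smul (L : Subgroup ↥H) (h : ↥H) (y : ↥H ⧸ L) :
    push H L (h • y) = (h : G) • push H L y := by
  induction y using Quotient.inductionOn' with
  | h a =>
    show push H L (h • ((a : ↥H) : ↥H ⧸ L)) = (h : G) • push H L ((a : ↥H) : ↥H ⧸ L)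
    rw [MulAction.Quotient.smul_mk, push_mk, push_mk, MulAction.Quotient.smul_mk]
    rfl

lemma ap_push {L M : Subgroup ↥H} (g : Fix L M)
    (w : Fix (L.map H.subtype) (M.map H.subtype))
    (hw : w.1 = push H M g.1) (y : ↥H ⧸ L) :
    w.ap (push H L y) = push H M (g.ap y) := by
  induction y using Quotient.inductionOn' with
  | h a =>
    show w.ap (((a : G)) : G ⧸ (L.map H.subtype)) = push H M (g.ap ((a : ↥H) : ↥H ⧸ L))
    rw [Fix.ap_mk, Fix.ap_mk, hw, ← push_smul]

/-- The functor `Or_{F_H}(H) ⥤ Or_F(G)` sending `H/K` to `G/K`. -/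
def toG (F : Set (Subgroup G)) : Obj ↥H (fam H F) ⥤ Obj G F where
  obj K := ⟨K.grp.map H.subtype, K.mem⟩
  map {K L} f := ⟨push H L.grp f.1, by
    rintro g hg
    obtain ⟨k, hk, rfl⟩ := hg
    show ((k : ↥H) : G) • push H L.grp f.1 = push H L.grp f.1
    rw [← push_smul, f.2 k hk]⟩
  map_id K := Subtype.ext (by
    show push H K.grp (((1 : ↥H)) : ↥H ⧸ K.grp) = (((1 : G)) : G ⧸ _)
    rw [push_mk, OneMemClass.coe_one])
  map_comp {K L M} f g := Subtype.ext ((ap_push H g _ rfl f.1).symm)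

/-- The restriction functor `res^G_H` from `RΓ_G`-modules to `RΓ_H`-modules,
given by precomposition with `toG`. -/
def resF (R : Type) [CommRing R] (F : Set (Subgroup G)) (H : Subgroup G) :
    OMod G R F ⥤ OMod ↥H R (fam H F) :=
  (Functor.whiskeringLeft _ _ (ModuleCat.{0} R)).obj (toG H F).op

instance (R : Type) [CommRing R] (F : Set (Subgroup G)) (H : Subgroup G) :
    (resF R F H).Additive where
  map_add {X Y f g} := by
    exact Functor.map_add (F := (Functor.whiskeringLeft _ _ (ModuleCat.{0} R)).obj (toG H F).op)

end Restriction

section Conjugation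

lemma mem_normalizer_of_mem_centralizer {Q : Subgroup G} {c : G}
    (hc : c ∈ Subgroup.centralizer (Q : Set G)) : c ∈ Subgroup.normalizer (Q : Set G) := by
  rw [Subgroup.mem_normalizer_iff]
  intro h
  constructor
  · intro hh
    have hcomm : h * c = c * h := Subgroup.mem_centralizer_iff.mp hc h hh
    have : c * h * c⁻¹ = h := by rw [← hcomm]; group
    rwa [this]
  · intro hh
    have hch : c * h * c⁻¹ ∈ Q := hh
    have hcomm : (c * h * c⁻¹) * c = c * (c * h * c⁻¹) :=
      Subgroup.mem_centralizer_iff.mp hc _ hch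
    have h1 : c * h = (c * h * c⁻¹) * c := by group
    have h4 : c * h = c * (c * h * c⁻¹) := h1.trans hcomm
    have h5 : h = c * h * c⁻¹ := mul_left_cancel h4
    rw [h5]
    exact hch
    
/-- The endomorphism of `G/Q` in the orbit category determined by an element
`n` of the normalizer of `Q`; it sends `gQ` to `g n⁻¹ Q`. -/
def conjMor {F : Set (Subgroup G)} (Q : Obj G F) (n : G) (hn : n ∈ Subgroup.normalizer (Q.grp : Set G)) :
    Q ⟶ Q :=
  ⟨((n⁻¹ : G) : G ⧸ Q.grp), fun q hq => by
    show q • (((n⁻¹ : G)) : G ⧸ Q.grp) = _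
    rw [MulAction.Quotient.smul_mk, smul_eq_mul]
    refine (QuotientGroup.eq).2 ?_
    have : (q * n⁻¹)⁻¹ * n⁻¹ = n * q⁻¹ * n⁻¹ := by group
    rw [this]
    exact (Subgroup.mem_normalizer_iff.mp hn q⁻¹).mp (inv_mem hq)⟩

/-- An `RΓ_G`-module `M` is conjugation invariant if, for every `Q ∈ F`,
the centralizer `C_G(Q)` acts trivially on `M(Q)`. -/
def ConjInv {R : Type} [CommRing R] {F : Set (Subgroup G)} (M : OMod G R F) : Prop :=
  ∀ (Q : Obj G F) (c : G) (hc : c ∈ Subgroup.centralizer (Q.grp : Set G)),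
    M.map (conjMor Q c (mem_normalizer_of_mem_centralizer hc)).op = 𝟙 (M.obj (Opposite.op Q))

/-- A subgroup `H` controls `p`-fusion in `G`. -/
def ControlsPFusion (p : ℕ) (H : Subgroup G) : Prop :=
  ¬ (p ∣ H.index) ∧
    ∀ (Q : Subgroup G) (g : G), Q ≤ H → IsPGroup p ↥Q → conjSub g⁻¹ Q ≤ H →
      ∃ c ∈ Subgroup.centralizer (Q : Set G), ∃ h ∈ H, g = c * h

end Conjugation

section Chains

variable {F : Set (Subgroup G)}

/-- `(A) ≤ (B)` : some conjugate of `A` is contained in `B`. -/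
def classLE (A B : Obj G F) : Prop := ∃ g : G, conjSub g A.grp ≤ B.grp

/-- `(A) < (B)` in the partial order of conjugacy classes of subgroups in `F`. -/
def classLT (A B : Obj G F) : Prop := classLE A B ∧ ¬ classLE B A

/-- A strict chain `(K_0) < (K_1) < ⋯ < (K_l)` of conjugacy classes in `F`. -/
def IsStrictChain {l : ℕ} (c : Fin (l + 1) → Obj G F) : Prop :=
  ∀ i : Fin l, classLT (c i.castSucc) (c i.succ)

end Chains


section Local

lemma spanPrime (p : ℕ) (hp : p.Prime) : (Ideal.span {(p : ℤ)}).IsPrime := by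
  rw [Ideal.span_singleton_prime (by exact_mod_cast hp.ne_zero)]
  exact Nat.prime_iff_prime_int.mp hp

/-- The ring `ℤ_(p)` of `p`-local integers. -/
abbrev zloc (p : ℕ) (hp : p.Prime) : Type :=
  Localization (@Ideal.primeCompl ℤ _ (Ideal.span {(p : ℤ)}) (spanPrime p hp))

instance {R S : Type} [CommRing R] [CommRing S] (f : R →+* S) :
    (ModuleCat.extendScalars.{0,0,0} f).Additive := by
  letI : PreservesColimits (ModuleCat.extendScalars.{0,0,0} f) :=
    (ModuleCat.extendRestrictScalarsAdj f).leftAdjoint_preservesColimits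
  letI := preservesBinaryBiproducts_of_preservesBinaryCoproducts
    (ModuleCat.extendScalars.{0,0,0} f)
  exact Functor.additive_of_preservesBinaryBiproducts _

/-- The `p`-localization functor on `ℤΓ_G`-modules, applying `ℤ_(p) ⊗_ℤ -` objectwise. -/
noncomputable def locF (F : Set (Subgroup G)) (p : ℕ) (hp : p.Prime) :
    OMod G ℤ F ⥤ OMod G (zloc p hp) F :=
  (Functor.whiskeringRight _ _ _).obj (ModuleCat.extendScalars (algebraMap ℤ (zloc p hp)))

instance (F : Set (Subgroup G)) (p : ℕ) (hp : p.Prime) : (locF F p hp).Additive where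
  map_add {X Y f g} := by
    exact Functor.map_add (F := (Functor.whiskeringRight _ _ _).obj
      (ModuleCat.extendScalars (algebraMap ℤ (zloc p hp))))

end Local


instance hasExtOMod (R : Type) [CommRing R] (F : Set (Subgroup G)) :
    HasExt.{1} (OMod G R F) := by
  letI : HasDerivedCategory.{1} (OMod G R F) := HasDerivedCategory.standard _
  exact hasExt_of_hasDerivedCategory.{1} _

end OrbitPaper

namespace OrbitPaper
namespace S5

open CategoryTheory CategoryTheory.Limits

variable {G : Type} [Group G]

section Basic

variable {H : Subgroup G}

/-- The canonical map `G ⧸ B → G ⧸ H` when `B ≤ H`. -/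
def toH {B : Subgroup G} (hB : B ≤ H) : G ⧸ B → G ⧸ H :=
  Quotient.map' id fun a b hab => by
    rw [QuotientGroup.leftRel_apply] at hab ⊢
    exact hB hab

@[simp] lemma toH_mk {B : Subgroup G} (hB : B ≤ H) (a : G) :
    toH hB ((a : G) : G ⧸ B) = (a : G ⧸ H) := rfl

lemma mem_conjSub {g x : G} {Q : Subgroup G} :
    x ∈ conjSub g Q ↔ ∃ q ∈ Q, g * q * g⁻¹ = x := by
  simp [conjSub, Subgroup.mem_map]

lemma conj_mem_conjSub (g : G) {q : G} {Q : Subgroup G} (hq : q ∈ Q) :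
    g⁻¹ * q * g ∈ conjSub g⁻¹ Q :=
  mem_conjSub.2 ⟨q, hq, by group⟩

lemma conjSub_le_iff {g : G} {Q B : Subgroup G} :
    conjSub g⁻¹ Q ≤ B ↔ ∀ q ∈ Q, g⁻¹ * q * g ∈ B := by
  constructor
  · intro h q hq
    exact h (conj_mem_conjSub g hq)
  · rintro h x hx
    obtain ⟨q, hq, rfl⟩ := mem_conjSub.1 hx
    have := h q hq
    simpa [mul_assoc] using this

lemma conj_mem_of_fix {K B : Subgroup G} (x : Fix K B) {a : G}
    (ha : ((a : G) : G ⧸ B) = x.1) {k : G} (hk : k ∈ K) : a⁻¹ * k * a ∈ B := by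
  have h := x.2 k⁻¹ (inv_mem hk)
  rw [← ha, MulAction.Quotient.smul_mk, smul_eq_mul] at h
  have h2 := (QuotientGroup.eq).1 h
  have h3 : (k⁻¹ * a)⁻¹ * a = a⁻¹ * k * a := by group
  rwa [h3] at h2

end Basic

section Main

variable {F : Set (Subgroup G)}

variable (H : Subgroup G) (K : Obj G F)

/-- Predicate on cosets `gH`: some (hence any) representative `g` satisfies `g⁻¹Kg ≤ H`. -/
def good (x : G ⧸ H) : Prop := conjSub x.out⁻¹ K.grp ≤ H

lemma conj_le_congr {g g' : G} (hg : (g : G ⧸ H) = (g' : G ⧸ H))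
    (h : conjSub g⁻¹ K.grp ≤ H) : conjSub g'⁻¹ K.grp ≤ H := by
  have hH : g⁻¹ * g' ∈ H := (QuotientGroup.eq).1 hg
  rw [conjSub_le_iff] at h ⊢
  intro q hq
  have h1 : g'⁻¹ * q * g' = (g⁻¹ * g')⁻¹ * (g⁻¹ * q * g) * (g⁻¹ * g') := by group
  rw [h1]
  exact mul_mem (mul_mem (inv_mem hH) (h q hq)) hH

lemma good_iff (g : G) : good H K ((g : G) : G ⧸ H) ↔ conjSub g⁻¹ K.grp ≤ H := by
  constructor
  · intro h
    exact conj_le_congr H K (QuotientGroup.out_eq' _) h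
  · intro h
    exact conj_le_congr H K (QuotientGroup.out_eq' _).symm h

variable (hF : IsFamily F) {n : ℕ} (e : Fin n ≃ {x : G ⧸ H // good H K x})

/-- Chosen coset representatives. -/
noncomputable def c (i : Fin n) : G := ((e i : {x : G ⧸ H // good H K x}) : G ⧸ H).out

lemma c_spec (i : Fin n) : ((c H K e i : G) : G ⧸ H) = (e i : {x : G ⧸ H // good H K x}).1 :=
  QuotientGroup.out_eq' _

lemma hc (i : Fin n) : conjSub (c H K e i)⁻¹ K.grp ≤ H := (e i).2

/-- The objects `H/(g_i⁻¹ K g_i)` of the orbit category of `H`. -/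
noncomputable def Oi (i : Fin n) : Obj ↥H (fam H F) :=
  ⟨(conjSub (c H K e i)⁻¹ K.grp).subgroupOf H, by
    show ((conjSub (c H K e i)⁻¹ K.grp).subgroupOf H).map H.subtype ∈ F
    rw [Subgroup.subgroupOf_map_subtype, inf_of_le_left (hc H K e i)]
    exact hF.1 K.grp K.mem (c H K e i)⁻¹⟩

lemma Oi_map (i : Fin n) :
    (Oi H K hF e i).grp.map H.subtype = conjSub (c H K e i)⁻¹ K.grp := by
  show ((conjSub (c H K e i)⁻¹ K.grp).subgroupOf H).map H.subtype = _
  rw [Subgroup.subgroupOf_map_subtype, inf_of_le_left (hc H K e i)]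

end Main

end S5
end OrbitPaper
namespace OrbitPaper
namespace S5

open CategoryTheory CategoryTheory.Limits

variable {G : Type} [Group G] {F : Set (Subgroup G)}
variable (H : Subgroup G) (K : Obj G F)

/-- The indexing category for the pointwise left Kan extension at `K`. -/
abbrev J := CostructuredArrow (toG H F).op (Opposite.op K)

variable {H K}

/-- The object of `Or_{F_H}(H)` underlying `j`. -/
abbrev Lobj (j : J H K) : Obj ↥H (fam H F) := j.left.unop

/-- The structure morphism of `j`, as a fixed coset. -/
abbrev uq (j : J H K) : Fix K.grp ((Lobj j).grp.map H.subtype) := j.hom.unop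

/-- A representative for the structure coset of `j`. -/
noncomputable def aj (j : J H K) : G := (uq j).1.out

lemma aj_spec (j : J H K) : ((aj j : G) : G ⧸ (Lobj j).grp.map H.subtype) = (uq j).1 :=
  QuotientGroup.out_eq' _

lemma conj_le_map (j : J H K) :
    conjSub (aj j)⁻¹ K.grp ≤ (Lobj j).grp.map H.subtype :=
  conjSub_le_iff.2 fun _ hq => conj_mem_of_fix (uq j) (aj_spec j) hq

/-- The coset in `G ⧸ H` attached to `j`. -/
noncomputable def cosH (j : J H K) : G ⧸ H :=
  toH (Subgroup.map_subtype_le _) (uq j).1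

lemma cosH_eq (j : J H K) : cosH j = ((aj j : G) : G ⧸ H) := by
  show toH (Subgroup.map_subtype_le _) (uq j).1 = _
  rw [← aj_spec j, toH_mk]

lemma good_cosH (j : J H K) : good H K (cosH j) := by
  rw [cosH_eq, good_iff]
  exact (conj_le_map j).trans (Subgroup.map_subtype_le _)

variable (hF : IsFamily F) {n : ℕ} (e : Fin n ≃ {x : G ⧸ H // good H K x})

/-- The component of `j`. -/
noncomputable def idx (j : J H K) : Fin n := e.symm ⟨cosH j, good_cosH j⟩

lemma c_idx (j : J H K) : ((c H K e (idx e j) : G) : G ⧸ H) = cosH j := by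
  rw [c_spec]
  exact congrArg Subtype.val (e.apply_symm_apply _)

lemma hmem (j : J H K) : (c H K e (idx e j))⁻¹ * aj j ∈ H :=
  (QuotientGroup.eq).1 (by rw [c_idx, cosH_eq])

/-- The element of `H` translating the chosen representative onto `aj j`. -/
noncomputable def hh (j : J H K) : ↥H := ⟨_, hmem e j⟩

lemma mem_of_map_mem {L : Subgroup ↥H} {x : ↥H} (h : (x : G) ∈ L.map H.subtype) : x ∈ L := by
  obtain ⟨y, hy, hxy⟩ := h
  have hyx : y = x := Subtype.ext hxy
  rwa [← hyx]

lemma push_inj {L : Subgroup ↥H} : Function.Injective (push H L) := by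
  intro x y h
  induction x using Quotient.inductionOn' with
  | h a =>
    induction y using Quotient.inductionOn' with
    | h b =>
      have h' : (((a : G)) : G ⧸ L.map H.subtype) = ((b : G) : G ⧸ L.map H.subtype) := h
      have h2 := (QuotientGroup.eq).1 h'
      have h3 : ((a⁻¹ * b : ↥H) : G) ∈ L.map H.subtype := by
        simpa using h2
      exact (QuotientGroup.eq (s := L)).2 (mem_of_map_mem h3)

lemma toH_push_ap {L1 L2 : Subgroup ↥H} (φ : Fix L1 L2)
    (w : Fix (L1.map H.subtype) (L2.map H.subtype)) (hw : w.1 = push H L2 φ.1)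
    (y : G ⧸ L1.map H.subtype) :
    toH (Subgroup.map_subtype_le _) (w.ap y) = toH (Subgroup.map_subtype_le _) y := by
  induction y using Quotient.inductionOn' with
  | h a =>
    obtain ⟨h₀, hh₀⟩ : ∃ h₀ : ↥H, ((h₀ : ↥H) : ↥H ⧸ L2) = φ.1 := ⟨φ.1.out, QuotientGroup.out_eq' _⟩
    show toH _ (w.ap ((a : G) : G ⧸ L1.map H.subtype)) = ((a : G) : G ⧸ H)
    rw [Fix.ap_mk, hw, ← hh₀, push_mk, MulAction.Quotient.smul_mk, smul_eq_mul, toH_mk]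
    refine (QuotientGroup.eq).2 ?_
    have h1 : (a * (h₀ : G))⁻¹ * a = ((h₀ : G))⁻¹ := by group
    rw [h1]
    exact inv_mem h₀.2

lemma uq_rel {j j' : J H K} (f : j ⟶ j') :
    (uq j).1 = ((toG H F).map f.left.unop).ap (uq j').1 := by
  have w := CostructuredArrow.w f
  have h : uq j = uq j' ≫ (toG H F).map f.left.unop := by
    show j.hom.unop = _
    rw [← w]
    rfl
  rw [h]
  rfl

lemma cosH_rel {j j' : J H K} (f : j ⟶ j') : cosH j = cosH j' := by
  show toH _ (uq j).1 = toH _ (uq j').1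
  rw [uq_rel f]
  exact toH_push_ap f.left.unop ((toG H F).map f.left.unop) rfl (uq j').1

lemma idx_rel {j j' : J H K} (f : j ⟶ j') : idx e j = idx e j' := by
  unfold idx
  congr 1
  exact Subtype.ext (cosH_rel f)

end S5
end OrbitPaper
namespace OrbitPaper
namespace S5

open CategoryTheory CategoryTheory.Limits

variable {G : Type} [Group G] {F : Set (Subgroup G)}
variable {H : Subgroup G} {K : Obj G F}
variable (hF : IsFamily F) {n : ℕ} (e : Fin n ≃ {x : G ⧸ H // good H K x})

/-- The canonical morphism `H/(g_i⁻¹Kg_i) ⟶ L j` in the orbit category of `H`. -/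
noncomputable def psi (j : J H K) : Fix (Oi H K hF e (idx e j)).grp (Lobj j).grp :=
  ⟨((hh e j : ↥H) : ↥H ⧸ (Lobj j).grp), by
    have hsub : ∀ q' : ↥H, (q' : G) ∈ conjSub (c H K e (idx e j))⁻¹ K.grp →
        (hh e j)⁻¹ * q' * hh e j ∈ (Lobj j).grp := by
      intro q' hq'
      obtain ⟨k, hk, hkq⟩ := mem_conjSub.1 hq'
      apply mem_of_map_mem (H := H)
      have h1 : (((hh e j)⁻¹ * q' * hh e j : ↥H) : G) = (aj j)⁻¹ * k * aj j := by
        push_cast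
        show ((hh e j : G))⁻¹ * (q' : G) * (hh e j : G) = _
        rw [← hkq]
        show ((c H K e (idx e j))⁻¹ * aj j)⁻¹ * _ * ((c H K e (idx e j))⁻¹ * aj j) = _
        group
      rw [h1]
      exact conj_le_map j (conj_mem_conjSub _ hk)
    intro q hq
    have hq' : (q : G) ∈ conjSub (c H K e (idx e j))⁻¹ K.grp := hq
    show q • ((hh e j : ↥H) : ↥H ⧸ (Lobj j).grp) = _
    rw [MulAction.Quotient.smul_mk, smul_eq_mul]
    refine (QuotientGroup.eq).2 ?_
    have h2 : (q * hh e j)⁻¹ * hh e j = (hh e j)⁻¹ * q⁻¹ * hh e j := by group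
    rw [h2]
    refine hsub q⁻¹ ?_
    show ((q : G))⁻¹ ∈ _
    exact inv_mem hq'⟩

lemma psi_val (j : J H K) : (psi hF e j).1 = ((hh e j : ↥H) : ↥H ⧸ (Lobj j).grp) := rfl

lemma psi_rel {j j' : J H K} (f : j ⟶ j') :
    (psi hF e j).1 = (f.left.unop).ap (psi hF e j').1 := by
  apply push_inj (H := H)
  rw [psi_val, psi_val, ← ap_push H f.left.unop ((toG H F).map f.left.unop) rfl, push_mk, push_mk]
  show ((((c H K e (idx e j))⁻¹ * aj j : G)) : G ⧸ (Lobj j).grp.map H.subtype) =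
    Fix.ap ((toG H F).map f.left.unop) (((c H K e (idx e j'))⁻¹ * aj j' : G) : G ⧸ _)
  rw [Fix.ap_mk, idx_rel e f]
  have h3 : ((((c H K e (idx e j'))⁻¹ * aj j : G)) : G ⧸ (Lobj j).grp.map H.subtype)
      = (c H K e (idx e j'))⁻¹ • ((aj j : G) : G ⧸ (Lobj j).grp.map H.subtype) := by
    rw [MulAction.Quotient.smul_mk, smul_eq_mul]
  rw [h3, aj_spec j, uq_rel f, ← aj_spec j']
  erw [Fix.ap_mk, smul_smul]
  rfl

/-- The structure morphism `G/K ⟶ G/(g_i⁻¹Kg_i)` in the orbit category of `G`. -/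
noncomputable def ui (i : Fin n) : Fix K.grp ((Oi H K hF e i).grp.map H.subtype) :=
  ⟨((c H K e i : G) : G ⧸ (Oi H K hF e i).grp.map H.subtype), by
    intro k hk
    show k • (((c H K e i : G)) : G ⧸ (Oi H K hF e i).grp.map H.subtype) =
      (((c H K e i : G)) : G ⧸ (Oi H K hF e i).grp.map H.subtype)
    rw [MulAction.Quotient.smul_mk, smul_eq_mul]
    refine (QuotientGroup.eq).2 ?_
    have h1 : (k * c H K e i)⁻¹ * c H K e i = (c H K e i)⁻¹ * k⁻¹ * c H K e i := by group
    rw [h1, Oi_map]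
    exact conj_mem_conjSub _ (inv_mem hk)⟩

/-- The distinguished ("terminal") object of the `i`-th component of `J H K`. -/
noncomputable def Tobj (i : Fin n) : J H K :=
  CostructuredArrow.mk
    (Y := Opposite.op (Oi H K hF e i))
    (Quiver.Hom.op (X := K) (Y := (toG H F).obj (Oi H K hF e i)) (ui hF e i))

lemma uq_Tobj (i : Fin n) : uq (Tobj hF e i) = ui hF e i := rfl

lemma cosH_Tobj (i : Fin n) : cosH (Tobj hF e i) = ((c H K e i : G) : G ⧸ H) := rfl

lemma idx_Tobj (i : Fin n) : idx e (Tobj hF e i) = i := by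
  unfold idx
  have h : (⟨cosH (Tobj hF e i), good_cosH _⟩ : {x : G ⧸ H // good H K x}) = e i := by
    refine Subtype.ext ?_
    show cosH (Tobj hF e i) = (e i).1
    rw [cosH_Tobj, c_spec]
  exact (congrArg e.symm h).trans (e.symm_apply_apply i)

lemma psi_Tobj_val (i : Fin n) :
    (psi hF e (Tobj hF e i)).1 = ((1 : ↥H) : ↥H ⧸ (Oi H K hF e i).grp) := by
  rw [psi_val]
  refine (QuotientGroup.eq).2 ?_
  rw [mul_one]
  refine inv_mem (?_ : hh e (Tobj hF e i) ∈ (Oi H K hF e i).grp)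
  have hmm : ((hh e (Tobj hF e i) : ↥H) : G) ∈ conjSub (c H K e i)⁻¹ K.grp := by
    show (c H K e (idx e (Tobj hF e i)))⁻¹ * aj (Tobj hF e i) ∈ _
    rw [idx_Tobj]
    have h1 : ((aj (Tobj hF e i) : G) : G ⧸ (Oi H K hF e i).grp.map H.subtype)
        = ((c H K e i : G) : G ⧸ _) := aj_spec (Tobj hF e i)
    have h2 := (QuotientGroup.eq).1 h1
    rw [Oi_map] at h2
    have h3 : (c H K e i)⁻¹ * aj (Tobj hF e i) = ((aj (Tobj hF e i))⁻¹ * c H K e i)⁻¹ := by group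
    rw [h3]
    exact inv_mem h2
  exact Subgroup.mem_subgroupOf.2 hmm

end S5
end OrbitPaper
namespace OrbitPaper
namespace S5
open CategoryTheory CategoryTheory.Limits
variable {G : Type} [Group G] {F : Set (Subgroup G)}
variable {H : Subgroup G} {K : Obj G F}
variable (hF : IsFamily F) {n : ℕ} (e : Fin n ≃ {x : G ⧸ H // good H K x})

/-- `psi` as a morphism in the orbit category of `H`. -/
noncomputable abbrev psiHom (j : J H K) : Oi H K hF e (idx e j) ⟶ Lobj j := psi hF e j

/-- `ui` as a morphism in the orbit category of `G`. -/
noncomputable abbrev uiHom (i : Fin n) : K ⟶ (toG H F).obj (Oi H K hF e i) := ui hF e i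

lemma h9lem (j : J H K) : uiHom hF e (idx e j) ≫ (toG H F).map (psiHom hF e j) = uq j := by
  refine Subtype.ext ?_
  show Fix.ap ((toG H F).map (psi hF e j)) (ui hF e (idx e j)).1 = (uq j).1
  rw [show (ui hF e (idx e j)).1 =
    ((c H K e (idx e j) : G) : G ⧸ (Oi H K hF e (idx e j)).grp.map H.subtype) from rfl]
  erw [Fix.ap_mk]
  show c H K e (idx e j) •
    ((((hh e j : ↥H) : G)) : G ⧸ (Lobj j).grp.map H.subtype) = (uq j).1
  rw [MulAction.Quotient.smul_mk, smul_eq_mul]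
  rw [show c H K e (idx e j) * ((hh e j : ↥H) : G) = aj j from
    mul_inv_cancel_left _ _]
  exact aj_spec j

noncomputable def morT (j : J H K) : j ⟶ Tobj hF e (idx e j) :=
  CostructuredArrow.homMk
    (Quiver.Hom.op (X := Oi H K hF e (idx e j)) (Y := Lobj j) (psi hF e j))
    (congrArg Quiver.Hom.op (h9lem hF e j))
end S5
end OrbitPaper
namespace OrbitPaper
namespace S5
open CategoryTheory CategoryTheory.Limits
variable {G : Type} [Group G] {F : Set (Subgroup G)}
variable {H : Subgroup G} {K : Obj G F}
variable (hF : IsFamily F) {n : ℕ} (e : Fin n ≃ {x : G ⧸ H // good H K x})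
variable (R : Type) [CommRing R] (N : OMod ↥H R (fam H F))

/-- The direct sum `⊕ᵢ N(g_i⁻¹Kg_i)` as an object of `ModuleCat R`. -/
noncomputable def DS : ModuleCat.{0} R :=
  ModuleCat.of R (DirectSum (Fin n) (fun i => (N.obj (Opposite.op (Oi H K hF e i)) : Type)))

/-- The inclusion of the `i`-th summand. -/
noncomputable def lofD (i : Fin n) : N.obj (Opposite.op (Oi H K hF e i)) ⟶ DS hF e R N :=
  ModuleCat.ofHom (DirectSum.lof R (Fin n) (fun i => (N.obj (Opposite.op (Oi H K hF e i)) : Type)) i)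

/-- The descent map out of the direct sum. -/
noncomputable def descD (s : Cocone (CostructuredArrow.proj (toG H F).op (Opposite.op K) ⋙ N)) :
    DS hF e R N ⟶ s.pt :=
  ModuleCat.ofHom (DirectSum.toModule R (Fin n) s.pt (fun i => (s.ι.app (Tobj hF e i)).hom))

lemma lofD_descD (s : Cocone (CostructuredArrow.proj (toG H F).op (Opposite.op K) ⋙ N))
    (i : Fin n) :
    lofD hF e R N i ≫ descD hF e R N s = s.ι.app (Tobj hF e i) := by
  refine ModuleCat.hom_ext (LinearMap.ext fun x => ?_)
  show DirectSum.toModule R (Fin n) s.pt (fun i => (s.ι.app (Tobj hF e i)).hom)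
      (DirectSum.lof R (Fin n) (fun i => (N.obj (Opposite.op (Oi H K hF e i)) : Type)) i x)
    = (s.ι.app (Tobj hF e i)).hom x
  exact DirectSum.toModule_lof R _ _
end S5
end OrbitPaper
namespace OrbitPaper
namespace S5
open CategoryTheory CategoryTheory.Limits
variable {G : Type} [Group G] {F : Set (Subgroup G)}
variable {H : Subgroup G} {K : Obj G F}
variable (hF : IsFamily F) {n : ℕ} (e : Fin n ≃ {x : G ⧸ H // good H K x})
variable (R : Type) [CommRing R] (N : OMod ↥H R (fam H F))

lemma key {i i' : Fin n} (h : i = i') {B : Obj ↥H (fam H F)}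
    (x : Fix (Oi H K hF e i).grp B.grp) (x' : Fix (Oi H K hF e i').grp B.grp)
    (hx : x.1 = x'.1) :
    N.map (Quiver.Hom.op (X := Oi H K hF e i) (Y := B) x) ≫ lofD hF e R N i =
      N.map (Quiver.Hom.op (X := Oi H K hF e i') (Y := B) x') ≫ lofD hF e R N i' := by
  subst h
  obtain rfl : x = x' := Subtype.ext hx
  rfl

/-- The colimit cocone exhibiting `⊕ᵢ N(g_i⁻¹Kg_i)` as the value of the induced module. -/
noncomputable def cc : Cocone (CostructuredArrow.proj (toG H F).op (Opposite.op K) ⋙ N) where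
  pt := DS hF e R N
  ι :=
    { app := fun j =>
        N.map (Quiver.Hom.op (X := Oi H K hF e (idx e j)) (Y := Lobj j) (psi hF e j)) ≫
          lofD hF e R N (idx e j)
      naturality := fun j j' f => by
        show (CostructuredArrow.proj (toG H F).op (Opposite.op K) ⋙ N).map f ≫ _ = _ ≫ 𝟙 _
        rw [Category.comp_id]
        show N.map f.left ≫
          (N.map (Quiver.Hom.op (X := Oi H K hF e (idx e j')) (Y := Lobj j') (psi hF e j')) ≫
            lofD hF e R N (idx e j')) = _
        rw [← Category.assoc, ← N.map_comp]
        exact key hF e R N (idx_rel e f).symm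
          (Fix.comp (psi hF e j') f.left.unop) (psi hF e j) (psi_rel hF e f).symm }

/-- The explicit cocone is colimiting. -/
noncomputable def isCol : IsColimit (cc hF e R N) where
  desc s := descD hF e R N s
  fac s j := by
    have hw := s.w (morT hF e j)
    show (N.map _ ≫ lofD hF e R N (idx e j)) ≫ _ = _
    rw [Category.assoc, lofD_descD hF e R N s (idx e j)]
    exact hw
  uniq s m hm := by
    have hext : ∀ (f g : DS hF e R N ⟶ s.pt),
        (∀ i, lofD hF e R N i ≫ f = lofD hF e R N i ≫ g) → f = g := by
      intro f g h
      exact ModuleCat.hom_ext (DirectSum.linearMap_ext R fun i => congrArg ModuleCat.Hom.hom (h i))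
    refine hext m (descD hF e R N s) fun i => ?_
    have hkey : lofD hF e R N i = (cc hF e R N).ι.app (Tobj hF e i) := by
      have h2 := key hF e R N (idx_Tobj hF e i).symm
        (Fix.one (Oi H K hF e i).grp) (psi hF e (Tobj hF e i)) (psi_Tobj_val hF e i).symm
      rw [show Quiver.Hom.op (X := Oi H K hF e i) (Y := Oi H K hF e i)
          (Fix.one (Oi H K hF e i).grp) = 𝟙 (Opposite.op (Oi H K hF e i)) from rfl,
        N.map_id, Category.id_comp] at h2
      exact h2
    rw [lofD_descD hF e R N s i, hkey]
    exact hm (Tobj hF e i)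
end S5
end OrbitPaper

open OrbitPaper CategoryTheory CategoryTheory.Limits

/-- For the induction functor `ind^G_H` (the left adjoint of the
restriction functor `res^G_H`), an `RΓ_H`-module `N` and `K ∈ F`, there is an isomorphism
of `R`-modules `(ind^G_H N)(G/K) ≅ ⊕ N(g⁻¹Kg)`, the sum running over the cosets
`gH ∈ G/H` with `g⁻¹Kg ≤ H`. -/
theorem statement5 (G : Type) [Group G] [Fintype G] (R : Type) [CommRing R]
    (F : Set (Subgroup G)) (hF : IsFamily F) (H : Subgroup G)
    (ind : OMod ↥H R (fam H F) ⥤ OMod G R F) (adj : ind ⊣ resF R F H)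
    (N : OMod ↥H R (fam H F)) (K : Obj G F) :
    ∃ (n : ℕ) (c : Fin n → G) (hc : ∀ i, conjSub (c i)⁻¹ K.grp ≤ H),
      (∀ g : G, conjSub g⁻¹ K.grp ≤ H →
        ∃! i : Fin n, ((g : G) : G ⧸ H) = ((c i : G) : G ⧸ H)) ∧
      Nonempty ((ind.obj N).obj (Opposite.op K) ≃ₗ[R]
        DirectSum (Fin n) (fun i => N.obj (Opposite.op
          (⟨(conjSub (c i)⁻¹ K.grp).subgroupOf H, by
              show ((conjSub (c i)⁻¹ K.grp).subgroupOf H).map H.subtype ∈ F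
              rw [Subgroup.subgroupOf_map_subtype, inf_of_le_left (hc i)]
              exact hF.1 K.grp K.mem (c i)⁻¹⟩ : Obj ↥H (fam H F))))) := by

  classical
  letI : Fintype {x : G ⧸ H // S5.good H K x} := Fintype.ofFinite _
  obtain ⟨e⟩ : Nonempty (Fin (Fintype.card {x : G ⧸ H // S5.good H K x}) ≃
      {x : G ⧸ H // S5.good H K x}) := ⟨(Fintype.equivFin _).symm⟩
  refine ⟨_, S5.c H K e, S5.hc H K e, ?_, ?_⟩
  · intro g hg
    have hgood : S5.good H K ((g : G) : G ⧸ H) := (S5.good_iff H K g).2 hg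
    refine ⟨e.symm ⟨((g : G) : G ⧸ H), hgood⟩, ?_, ?_⟩
    · exact ((S5.c_spec H K e (e.symm ⟨((g : G) : G ⧸ H), hgood⟩)).trans
        (congrArg Subtype.val (e.apply_symm_apply ⟨((g : G) : G ⧸ H), hgood⟩))).symm
    · intro i hi
      have h1 : e i = ⟨((g : G) : G ⧸ H), hgood⟩ :=
        Subtype.ext ((S5.c_spec H K e i).symm.trans hi.symm)
      rw [← h1, e.symm_apply_apply]
  · let Φ := (toG H F).op
    let adj2 := Φ.lanAdjunction (ModuleCat.{0} R)
    let isoLan : ind ≅ Φ.lan := adj.leftAdjointUniq adj2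
    refine ⟨?_⟩
    let i1 : (ind.obj N).obj (Opposite.op K) ≅ (Φ.lan.obj N).obj (Opposite.op K) :=
      (isoLan.app N).app (Opposite.op K)
    let i2 : (Φ.lan.obj N).obj (Opposite.op K) ≅
        colimit (CostructuredArrow.proj Φ (Opposite.op K) ⋙ N) :=
      Φ.leftKanExtensionObjIsoColimit N (Opposite.op K)
    let i3 : colimit (CostructuredArrow.proj Φ (Opposite.op K) ⋙ N) ≅ (S5.cc hF e R N).pt :=
      (colimit.isColimit _).coconePointUniqueUpToIso (S5.isCol hF e R N)
    exact (i1 ≪≫ i2 ≪≫ i3).toLinearEquiv
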